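/- Let G be a finite solvable group, N a cyclic normal subgroup of G, a ∈ G, C = C_G(a), and C_N = {g ∈ G : [a,g] ∈ N}. Then dl(C_N / core_{C_N}(C)) ≤ 2. -/

import Mathlib

open Subgroup
open scoped commutatorElement

/-- Two automorphisms of a cyclic group commute. -/
private lemma mulAut_comm_of_isCyclic {N : Type*} [Group N] (h : IsCyclic N) (σ τ : MulAut N) :
    σ * τ = τ * σ := by
  obtain ⟨g, hg⟩ := h.exists_generator
  obtain ⟨m, hm⟩ := hg (τ g)
  obtain ⟨l, hl⟩ := hg (σ g)
  have key : σ (τ g) = τ (σ g) := by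
    rw [← hm, ← hl, map_zpow, map_zpow, ← hl, ← hm, ← zpow_mul, ← zpow_mul, mul_comm]
  ext x
  obtain ⟨k, hk⟩ := hg x
  simp only [MulAut.mul_apply, ← hk, map_zpow, key]

private lemma comm_aux {G : Type*} [Group G] {N : Subgroup G}
    (Ncomm : ∀ x ∈ N, ∀ y ∈ N, x * y = y * x) (a u v : G)
    (hu : a⁻¹ * u⁻¹ * a * u ∈ N) (hv : a⁻¹ * v⁻¹ * a * v ∈ N)
    (hu' : ∀ n ∈ N, n * u = u * n) (hv' : ∀ n ∈ N, n * v = v * n) :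
    a * ⁅u, v⁆ = ⁅u, v⁆ * a := by
  have e1 : a⁻¹ * (u * v)⁻¹ * a * (u * v)
      = (a⁻¹ * v⁻¹ * a * v) * (a⁻¹ * u⁻¹ * a * u) := by
    have hc : (a⁻¹ * u⁻¹ * a * u) * v = v * (a⁻¹ * u⁻¹ * a * u) := hv' _ hu
    calc a⁻¹ * (u * v)⁻¹ * a * (u * v)
        = (a⁻¹ * v⁻¹ * a * v) * (v⁻¹ * ((a⁻¹ * u⁻¹ * a * u) * v)) := by group
      _ = (a⁻¹ * v⁻¹ * a * v) * (v⁻¹ * (v * (a⁻¹ * u⁻¹ * a * u))) := by rw [hc]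
      _ = (a⁻¹ * v⁻¹ * a * v) * (a⁻¹ * u⁻¹ * a * u) := by group
  have e2 : a⁻¹ * (v * u)⁻¹ * a * (v * u)
      = (a⁻¹ * u⁻¹ * a * u) * (a⁻¹ * v⁻¹ * a * v) := by
    have hc : (a⁻¹ * v⁻¹ * a * v) * u = u * (a⁻¹ * v⁻¹ * a * v) := hu' _ hv
    calc a⁻¹ * (v * u)⁻¹ * a * (v * u)
        = (a⁻¹ * u⁻¹ * a * u) * (u⁻¹ * ((a⁻¹ * v⁻¹ * a * v) * u)) := by group
      _ = (a⁻¹ * u⁻¹ * a * u) * (u⁻¹ * (u * (a⁻¹ * v⁻¹ * a * v))) := by rw [hc]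
      _ = (a⁻¹ * u⁻¹ * a * u) * (a⁻¹ * v⁻¹ * a * v) := by group
  have e4 : a⁻¹ * (u * v)⁻¹ * a * (u * v) = a⁻¹ * (v * u)⁻¹ * a * (v * u) := by
    rw [e1, e2, Ncomm _ hv _ hu]
  have e5 : a * (u * v * u⁻¹ * v⁻¹) = u * v * u⁻¹ * v⁻¹ * a := by
    calc a * (u * v * u⁻¹ * v⁻¹)
        = u * v * a * ((a⁻¹ * (u * v)⁻¹ * a * (u * v)) * (u⁻¹ * v⁻¹)) := by group
      _ = u * v * a * ((a⁻¹ * (v * u)⁻¹ * a * (v * u)) * (u⁻¹ * v⁻¹)) := by rw [e4]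
      _ = u * v * u⁻¹ * v⁻¹ * a := by group
  rw [commutatorElement_def]
  exact e5

/-- `G` finite solvable, `N` cyclic normal, `a ∈ G`, `C = C_G(a)`,
`C_N = {g : [a,g] ∈ N}`. Then `dl(C_N/core_{C_N}(C)) ≤ 2`. -/
theorem stmt7 {G : Type*} [Group G] [Fintype G] (hG : IsSolvable G)
    (N : Subgroup G) [N.Normal] (hcyc : IsCyclic ↥N) (a : G)
    (CN : Subgroup G) (hCN : ∀ g : G, g ∈ CN ↔ a⁻¹ * g⁻¹ * a * g ∈ N) :
    derivedSeries (↥CN ⧸ ((Subgroup.centralizer {a}).subgroupOf CN).normalCore) 2 = ⊥ := by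
  set K := (Subgroup.centralizer {a}).subgroupOf CN with hKdef
  -- commutativity inside N
  have Ncomm : ∀ x ∈ N, ∀ y ∈ N, x * y = y * x := by
    intro x hx y hy
    have := (hcyc.commGroup).mul_comm ⟨x, hx⟩ ⟨y, hy⟩
    exact congrArg Subtype.val this
  -- every commutator in G centralizes N
  have hGN : ∀ g h : G, ⁅g, h⁆ ∈ Subgroup.centralizer (N : Set G) := by
    intro g h
    rw [Subgroup.mem_centralizer_iff]
    intro n hn
    have h1 : MulAut.conjNormal (G := G) ⁅g, h⁆ = (1 : MulAut ↥N) := by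
      rw [map_commutatorElement, commutatorElement_eq_one_iff_mul_comm]
      exact mulAut_comm_of_isCyclic hcyc _ _
    have h2 := congrArg (fun σ : MulAut ↥N => ((σ ⟨n, hn⟩ : ↥N) : G)) h1
    simp only [MulAut.conjNormal_apply, MulAut.one_apply] at h2
    -- h2 : ⁅g,h⁆ * n * ⁅g,h⁆⁻¹ = n
    calc n * ⁅g, h⁆ = (⁅g, h⁆ * n * ⁅g, h⁆⁻¹) * ⁅g, h⁆ := by rw [h2]
      _ = ⁅g, h⁆ * n := by group
  -- the first derived subgroup of CN centralizes N
  have hD1 : derivedSeries ↥CN 1 ≤ (Subgroup.centralizer (N : Set G)).subgroupOf CN := by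
    rw [show (1 : ℕ) = 0 + 1 from rfl, derivedSeries_succ, derivedSeries_zero]
    rw [Subgroup.commutator_le]
    intro g _ h _
    rw [Subgroup.mem_subgroupOf]
    have : ((⁅g, h⁆ : ↥CN) : G) = ⁅(g : G), (h : G)⁆ := rfl
    rw [this]
    exact hGN _ _
  -- the second derived subgroup of CN is contained in K
  have hD2 : derivedSeries ↥CN 2 ≤ K := by
    rw [show (2 : ℕ) = 1 + 1 from rfl, derivedSeries_succ, Subgroup.commutator_le]
    intro p hp q hq
    have hp' := hD1 hp
    have hq' := hD1 hq
    rw [Subgroup.mem_subgroupOf] at hp' hq' ⊢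
    have hcoe : ((⁅p, q⁆ : ↥CN) : G) = ⁅(p : G), (q : G)⁆ := rfl
    rw [hcoe, Subgroup.mem_centralizer_iff]
    rintro g hg
    rw [Set.mem_singleton_iff] at hg
    subst hg
    refine comm_aux Ncomm g (p : G) (q : G) ((hCN _).mp p.2) ((hCN _).mp q.2) ?_ ?_
    · intro n hn
      exact (Subgroup.mem_centralizer_iff.mp hp') n hn
    · intro n hn
      exact (Subgroup.mem_centralizer_iff.mp hq') n hn
  have hcore : derivedSeries ↥CN 2 ≤ K.normalCore := by
    haveI := derivedSeries_normal (↥CN) 2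
    exact Subgroup.normal_le_normalCore.mpr hD2
  have hsurj : Function.Surjective (QuotientGroup.mk' K.normalCore) :=
    QuotientGroup.mk'_surjective _
  rw [← map_derivedSeries_eq hsurj 2, Subgroup.map_eq_bot_iff, QuotientGroup.ker_mk']
  exact hcore
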